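/- Let {(A_{i,ℓ}, A_{i,r}, A_{i,c})}_{i∈I} be a combinatorially free-free-Boolean independent family of triples of subalgebras of a noncommutative probability space (A,φ). Let ω : {1,…,n} → I, χ : {1,…,n} → {ℓ,r,c}, z_k ∈ A_{ω(k),χ(k)} for all k, and let ε = ker ω be the partition of {1,…,n} whose blocks are the level sets of ω. Then φ(z₁ ⋯ zₙ) = Σ_{σ ∈ IBNC(χ)} ( Σ_{π ∈ IBNC(χ), σ ≤ π ≤ ε} μ_{IBNC(χ)}(σ,π) ) φ_σ(z₁,…,zₙ). -/

import Mathlib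

namespace FFB

/-- The three letters ℓ, c, r labelling the faces. -/
inductive Letter : Type where
  | l | c | r
deriving DecidableEq

/-- `x` is one of the letters `ℓ`, `c`. -/
def isLC (x : Letter) : Prop := x = Letter.l ∨ x = Letter.c

variable {α : Type*}

/-- The total order `≺_χ` on the index set determined by `χ`:
the elements of `χ⁻¹{ℓ,c}` in increasing order followed by the elements of
`χ⁻¹{r}` in decreasing order. -/
def chiLT [LT α] (χ : α → Letter) (i j : α) : Prop :=
  (isLC (χ i) ∧ isLC (χ j) ∧ i < j)
  ∨ (isLC (χ i) ∧ χ j = Letter.r)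
  ∨ (χ i = Letter.r ∧ χ j = Letter.r ∧ j < i)

/-- A partition (equivalence relation) `π` is `χ`-noncrossing if there is no quadruple
`s₁ ≺_χ r₁ ≺_χ s₂ ≺_χ r₂` with `s₁ ∼ s₂`, `r₁ ∼ r₂` lying in different blocks. -/
def ChiNoncrossing [LT α] (χ : α → Letter) (π : Setoid α) : Prop :=
  ∀ s₁ r₁ s₂ r₂ : α, chiLT χ s₁ r₁ → chiLT χ r₁ s₂ → chiLT χ s₂ r₂ →
    π s₁ s₂ → π r₁ r₂ → π s₁ r₁

/-- A partition `π` is `χ`-interval if whenever `i < j < k`, `i ∼ k` and `χ j = c`,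
then `i, j, k` all lie in the same block. -/
def ChiInterval [LT α] (χ : α → Letter) (π : Setoid α) : Prop :=
  ∀ i j k : α, i < j → j < k → χ j = Letter.c → π i k → π i j

/-- The set of interval-bi-noncrossing partitions with respect to `χ`. -/
def IBNC [LT α] (χ : α → Letter) : Set (Setoid α) :=
  {π | ChiNoncrossing χ π ∧ ChiInterval χ π}

/-- The set of `χ`-noncrossing partitions. -/
def NC [LT α] (χ : α → Letter) : Set (Setoid α) :=
  {π | ChiNoncrossing χ π}

/-- Restriction of a partition of `α` to a subset `V ⊆ α`. -/
def restrict (V : Set α) (σ : Setoid α) : Setoid V := Setoid.comap Subtype.val σ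

/-- Restriction of `χ` to a subset `V ⊆ α`. -/
def restChi (V : Set α) (χ : α → Letter) : V → Letter := fun x => χ x.1

/- `mu` is the Möbius function of the finite poset `P` (with the induced order):
it is the (two-sided) convolution inverse of the zeta function. -/
open Classical in
def IsMobius {β : Type*} [PartialOrder β] (P : Set β) (mu : β → β → ℂ) : Prop :=
  ∀ a ∈ P, ∀ b ∈ P, a ≤ b →
    ((∑ᶠ c ∈ {c | c ∈ P ∧ a ≤ c ∧ c ≤ b}, mu a c) = if a = b then 1 else 0) ∧
    ((∑ᶠ c ∈ {c | c ∈ P ∧ a ≤ c ∧ c ≤ b}, mu c b) = if a = b then 1 else 0)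

section Moments

variable {A : Type*} [Ring A] [LinearOrder α] [Finite α]

/-- `φ_V(z₁,…,zₙ) = φ(z_{l₁} ⋯ z_{l_k})` where `V = {l₁ < ⋯ < l_k}`. -/
noncomputable def phiV (φ : A → ℂ) (z : α → A) (V : Set α) : ℂ :=
  φ (((Set.toFinite V).toFinset.sort (· ≤ ·)).map z).prod

/-- `φ_σ(z₁,…,zₙ) = ∏_{V ∈ σ} φ_V(z₁,…,zₙ)`. -/
noncomputable def phiPart (φ : A → ℂ) (z : α → A) (σ : Setoid α) : ℂ :=
  ∏ᶠ q : Quotient σ, phiV φ z {y | Quotient.mk σ y = q}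

/-- The free-free-Boolean cumulant
`κ_{χ,π}(z₁,…,zₙ) = Σ_{σ ∈ IBNC(χ), σ ≤ π} μ_{IBNC(χ)}(σ,π) φ_σ(z₁,…,zₙ)`,
where `mu` is (a function which is) the Möbius function of `IBNC(χ)`. -/
noncomputable def cum (φ : A → ℂ) (χ : α → Letter)
    (mu : Setoid α → Setoid α → ℂ) (z : α → A) (π : Setoid α) : ℂ :=
  ∑ᶠ σ ∈ {σ | σ ∈ IBNC χ ∧ σ ≤ π}, mu σ π * phiPart φ z σ

end Moments

/-- Combinatorial free-free-Boolean independence: mixed cumulants vanish.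
`F i x` is the face of the `i`-th triple labelled by the letter `x`. -/
def CombFFB {A : Type*} [Ring A] [Algebra ℂ A] (φ : A →ₗ[ℂ] ℂ) {I : Type*}
    (F : I → Letter → NonUnitalSubalgebra ℂ A) : Prop :=
  ∀ (n : ℕ) (χ : Fin n → Letter) (ω : Fin n → I) (z : Fin n → A),
    (∀ k, z k ∈ F (ω k) (χ k)) → (¬ ∃ i, ∀ k, ω k = i) →
    ∀ mu : Setoid (Fin n) → Setoid (Fin n) → ℂ, IsMobius (IBNC χ) mu →
      cum (⇑φ) χ mu z ⊤ = 0

end FFB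

namespace FFB
open Classical

section Helpers

variable {α : Type*}

instance setoidFinite [Finite α] : Finite (Setoid α) :=
  Finite.of_injective (fun s : Setoid α => (s : α → α → Prop))
    (fun _ _ h => Setoid.ext fun {x y} => iff_of_eq (congrFun₂ h x y))

lemma setoid_le_def {σ τ : Setoid α} : σ ≤ τ ↔ ∀ x y : α, σ x y → τ x y := Iff.rfl

lemma top_mem_IBNC [LT α] (χ : α → Letter) : (⊤ : Setoid α) ∈ IBNC χ :=
  ⟨fun _ _ _ _ _ _ _ _ _ => trivial, fun _ _ _ _ _ _ _ => trivial⟩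

lemma comap_rel {γ : Type*} (f : γ → α) (σ : Setoid α) (x y : γ) :
    Setoid.comap f σ x y ↔ σ (f x) (f y) := Iff.rfl

lemma finsum_mem_setOf_eq_sum {β : Type*} [Fintype β] (p : β → Prop) (F : β → ℂ) :
    ∑ᶠ x ∈ {y | p y}, F x = ∑ x : β, if p x then F x else 0 := by
  have h : {y | p y} = ↑(Finset.univ.filter p) := by ext y; simp
  rw [h, finsum_mem_coe_finset, Finset.sum_filter]

end Helpers

section Emb

variable {α γ δ : Type*}

lemma chiLT_comp [LinearOrder α] [LinearOrder γ] {f : γ → α}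
    (hf : ∀ a b : γ, a < b ↔ f a < f b)
    {χ : α → Letter} {χ' : γ → Letter} (hχ : ∀ x, χ' x = χ (f x)) (i j : γ) :
    chiLT χ' i j ↔ chiLT χ (f i) (f j) := by
  unfold chiLT
  rw [hχ i, hχ j, hf i j, hf j i]

lemma comap_mem_IBNC [LinearOrder α] [LinearOrder γ] {f : γ → α}
    (hf : ∀ a b : γ, a < b ↔ f a < f b)
    {χ : α → Letter} {χ' : γ → Letter} (hχ : ∀ x, χ' x = χ (f x))
    {σ : Setoid α} (hσ : σ ∈ IBNC χ) : Setoid.comap f σ ∈ IBNC χ' := by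
  constructor
  · intro s₁ r₁ s₂ r₂ h1 h2 h3 hs hr
    exact hσ.1 _ _ _ _ ((chiLT_comp hf hχ _ _).1 h1) ((chiLT_comp hf hχ _ _).1 h2)
      ((chiLT_comp hf hχ _ _).1 h3) hs hr
  · intro i j k hij hjk hc hik
    rw [hχ j] at hc
    exact hσ.2 _ _ _ ((hf _ _).1 hij) ((hf _ _).1 hjk) hc hik

lemma restrict_mem_IBNC [LinearOrder α] {χ : α → Letter} {σ : Setoid α} (hσ : σ ∈ IBNC χ)
    (V : Set α) : restrict V σ ∈ IBNC (restChi V χ) := by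
  unfold restrict
  exact comap_mem_IBNC (f := Subtype.val) (σ := σ) (fun _ _ => Iff.symm Subtype.coe_lt_coe) (fun _ => rfl) hσ

lemma map_sort [LinearOrder α] [LinearOrder γ] {f : γ → α}
    (hf : ∀ a b : γ, a ≤ b ↔ f a ≤ f b) (s : Finset γ) :
    (s.image f).sort (· ≤ ·) = (s.sort (· ≤ ·)).map f := by
  have hinj : Function.Injective f := fun a b h =>
    le_antisymm ((hf a b).2 h.le) ((hf b a).2 h.ge)
  have hperm : List.Perm ((s.image f).sort (· ≤ ·)) ((s.sort (· ≤ ·)).map f) := by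
    rw [← Multiset.coe_eq_coe, Finset.sort_eq, ← Multiset.map_coe, Finset.sort_eq]
    rw [Finset.image_val, Multiset.dedup_eq_self.2 (s.nodup.map hinj)]
  have hs2 : List.Pairwise (· ≤ ·) ((s.sort (· ≤ ·)).map f) :=
    List.Pairwise.map f (fun a b hab => (hf a b).1 hab) (Finset.pairwise_sort _ _)
  exact List.Perm.eq_of_pairwise' (Finset.pairwise_sort _ _) hs2 hperm

lemma phiV_comp {A : Type*} [Ring A] [LinearOrder α] [LinearOrder γ] [Finite α] [Finite γ]
    (φ : A → ℂ) (z : α → A) {f : γ → α} (hf : ∀ a b : γ, a ≤ b ↔ f a ≤ f b) (s : Set γ) :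
    phiV φ (fun x => z (f x)) s = phiV φ z (f '' s) := by
  unfold phiV
  congr 1
  have h1 : (Set.toFinite (f '' s)).toFinset = (Set.toFinite s).toFinset.image f := by
    ext x; simp
  rw [h1, map_sort hf, List.map_map]
  rfl

end Emb

section Mobius

variable {β : Type*} [PartialOrder β] [Finite β]

lemma exists_isMobius (P : Set β) : ∃ mu : β → β → ℂ, IsMobius P mu := by
  haveI : Fintype β := Fintype.ofFinite β
  haveI : LocallyFiniteOrder β := Fintype.toLocallyFiniteOrder
  refine ⟨fun a b => if h : a ∈ P ∧ b ∈ P then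
      IncidenceAlgebra.mu ℂ (⟨a, h.1⟩ : ↥P) (⟨b, h.2⟩ : ↥P) else 0, ?_⟩
  intro a ha b hb hab
  have hset : {c | c ∈ P ∧ a ≤ c ∧ c ≤ b}
      = Subtype.val '' ((Finset.Icc (⟨a, ha⟩ : ↥P) (⟨b, hb⟩ : ↥P) : Finset ↥P) : Set ↥P) := by
    ext c
    simp only [Set.mem_image, Finset.coe_Icc, Set.mem_Icc, Set.mem_setOf_eq]
    constructor
    · rintro ⟨hc, h1, h2⟩
      exact ⟨⟨c, hc⟩, ⟨h1, h2⟩, rfl⟩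
    · rintro ⟨⟨c', hc'⟩, ⟨h1, h2⟩, rfl⟩
      exact ⟨hc', h1, h2⟩
  have hiff : a = b ↔ (⟨a, ha⟩ : ↥P) = ⟨b, hb⟩ := by simp [Subtype.ext_iff]
  constructor
  · rw [hset, finsum_mem_image (Subtype.val_injective.injOn), finsum_mem_coe_finset]
    have heq : ∀ x ∈ Finset.Icc (⟨a, ha⟩ : ↥P) ⟨b, hb⟩,
        (if h : a ∈ P ∧ (x : β) ∈ P then
          IncidenceAlgebra.mu ℂ (⟨a, h.1⟩ : ↥P) ⟨(x : β), h.2⟩ else 0)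
          = IncidenceAlgebra.mu ℂ (⟨a, ha⟩ : ↥P) x := by
      intro x _
      rw [dif_pos ⟨ha, x.2⟩]
    refine Eq.trans (Finset.sum_congr rfl heq) ?_
    rw [IncidenceAlgebra.sum_Icc_mu_right]
    simp only [hiff]
  · rw [hset, finsum_mem_image (Subtype.val_injective.injOn), finsum_mem_coe_finset]
    have heq : ∀ x ∈ Finset.Icc (⟨a, ha⟩ : ↥P) ⟨b, hb⟩,
        (if h : (x : β) ∈ P ∧ b ∈ P then
          IncidenceAlgebra.mu ℂ (⟨(x : β), h.1⟩ : ↥P) ⟨b, h.2⟩ else 0)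
          = IncidenceAlgebra.mu ℂ x (⟨b, hb⟩ : ↥P) := by
      intro x _
      rw [dif_pos ⟨x.2, hb⟩]
    refine Eq.trans (Finset.sum_congr rfl heq) ?_
    rw [IncidenceAlgebra.sum_Icc_mu_left]
    simp only [hiff]

lemma mobius_row_unique (P : Set β) (b : β) (f g : β → ℂ)
    (hf : ∀ a ∈ P, a ≤ b →
      (∑ᶠ c ∈ {c | c ∈ P ∧ a ≤ c ∧ c ≤ b}, f c) = if a = b then 1 else 0)
    (hg : ∀ a ∈ P, a ≤ b →
      (∑ᶠ c ∈ {c | c ∈ P ∧ a ≤ c ∧ c ≤ b}, g c) = if a = b then 1 else 0) :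
    ∀ a ∈ P, a ≤ b → f a = g a := by
  haveI : Fintype β := Fintype.ofFinite β
  have key : ∀ (N : ℕ) (a : β), a ∈ P → a ≤ b →
      (Set.toFinite {c | c ∈ P ∧ a ≤ c ∧ c ≤ b}).toFinset.card ≤ N → f a = g a := by
    intro N
    induction N with
    | zero =>
      intro a ha hab hcard
      exfalso
      have haS : a ∈ (Set.toFinite {c | c ∈ P ∧ a ≤ c ∧ c ≤ b}).toFinset := by
        rw [Set.Finite.mem_toFinset, Set.mem_setOf_eq]
        exact ⟨ha, le_rfl, hab⟩
      have := Finset.card_pos.2 ⟨a, haS⟩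
      omega
    | succ N ih =>
      intro a ha hab hcard
      have haS : a ∈ (Set.toFinite {c | c ∈ P ∧ a ≤ c ∧ c ≤ b}).toFinset := by
        rw [Set.Finite.mem_toFinset, Set.mem_setOf_eq]
        exact ⟨ha, le_rfl, hab⟩
      have hfs : ∑ c ∈ (Set.toFinite {c | c ∈ P ∧ a ≤ c ∧ c ≤ b}).toFinset, f c
          = if a = b then 1 else 0 := by
        rw [← hf a ha hab]
        exact (finsum_mem_eq_finite_toFinset_sum f (Set.toFinite _)).symm
      have hgs : ∑ c ∈ (Set.toFinite {c | c ∈ P ∧ a ≤ c ∧ c ≤ b}).toFinset, g c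
          = if a = b then 1 else 0 := by
        rw [← hg a ha hab]
        exact (finsum_mem_eq_finite_toFinset_sum g (Set.toFinite _)).symm
      have hrest : ∑ c ∈ (Set.toFinite {c | c ∈ P ∧ a ≤ c ∧ c ≤ b}).toFinset.erase a, f c
          = ∑ c ∈ (Set.toFinite {c | c ∈ P ∧ a ≤ c ∧ c ≤ b}).toFinset.erase a, g c := by
        apply Finset.sum_congr rfl
        intro c hc
        have hcS := Finset.mem_of_mem_erase hc
        have hcne : c ≠ a := Finset.ne_of_mem_erase hc
        rw [Set.Finite.mem_toFinset, Set.mem_setOf_eq] at hcS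
        apply ih c hcS.1 hcS.2.2
        have hsub : (Set.toFinite {d | d ∈ P ∧ c ≤ d ∧ d ≤ b}).toFinset
            ⊆ (Set.toFinite {c | c ∈ P ∧ a ≤ c ∧ c ≤ b}).toFinset.erase a := by
          intro d hd
          rw [Set.Finite.mem_toFinset, Set.mem_setOf_eq] at hd
          rw [Finset.mem_erase]
          refine ⟨?_, ?_⟩
          · intro hda
            subst hda
            exact hcne (le_antisymm hd.2.1 hcS.2.1)
          · rw [Set.Finite.mem_toFinset, Set.mem_setOf_eq]
            exact ⟨hd.1, hcS.2.1.trans hd.2.1, hd.2.2⟩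
        calc (Set.toFinite {d | d ∈ P ∧ c ≤ d ∧ d ≤ b}).toFinset.card
            ≤ ((Set.toFinite {c | c ∈ P ∧ a ≤ c ∧ c ≤ b}).toFinset.erase a).card :=
              Finset.card_le_card hsub
          _ = (Set.toFinite {c | c ∈ P ∧ a ≤ c ∧ c ≤ b}).toFinset.card - 1 :=
              Finset.card_erase_of_mem haS
          _ ≤ N := by omega
      have h1 : f a + ∑ c ∈ (Set.toFinite {c | c ∈ P ∧ a ≤ c ∧ c ≤ b}).toFinset.erase a, f c
          = g a + ∑ c ∈ (Set.toFinite {c | c ∈ P ∧ a ≤ c ∧ c ≤ b}).toFinset.erase a, g c := by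
        rw [Finset.add_sum_erase _ _ haS, Finset.add_sum_erase _ _ haS, hfs, hgs]
      rw [hrest] at h1
      exact add_right_cancel h1
  intro a ha hab
  exact key _ a ha hab le_rfl

end Mobius

section Glue

variable {α : Type*}

/-- The partition of `α` obtained by putting a partition of `B` and a partition of `Bᶜ`
side by side. -/
def glue (B : Set α) (τ : Setoid ↥B) (ρ : Setoid ↥(Bᶜ)) : Setoid α where
  r x y := (∃ hx : x ∈ B, ∃ hy : y ∈ B, τ ⟨x, hx⟩ ⟨y, hy⟩)
    ∨ (∃ hx : x ∈ Bᶜ, ∃ hy : y ∈ Bᶜ, ρ ⟨x, hx⟩ ⟨y, hy⟩)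
  iseqv := by
    constructor
    · intro x
      by_cases h : x ∈ B
      · exact Or.inl ⟨h, h, τ.refl _⟩
      · exact Or.inr ⟨h, h, ρ.refl _⟩
    · rintro x y (⟨hx, hy, h⟩ | ⟨hx, hy, h⟩)
      · exact Or.inl ⟨hy, hx, τ.symm h⟩
      · exact Or.inr ⟨hy, hx, ρ.symm h⟩
    · rintro x y zz (⟨hx, hy, h⟩ | ⟨hx, hy, h⟩) (⟨hy', hz, h'⟩ | ⟨hy', hz, h'⟩)
      · exact Or.inl ⟨hx, hz, τ.trans h h'⟩
      · exact absurd hy hy'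
      · exact absurd hy' hy
      · exact Or.inr ⟨hx, hz, ρ.trans h h'⟩

lemma glue_rel (B : Set α) (τ : Setoid ↥B) (ρ : Setoid ↥(Bᶜ)) (x y : α) :
    glue B τ ρ x y ↔ (∃ hx : x ∈ B, ∃ hy : y ∈ B, τ ⟨x, hx⟩ ⟨y, hy⟩)
      ∨ (∃ hx : x ∈ Bᶜ, ∃ hy : y ∈ Bᶜ, ρ ⟨x, hx⟩ ⟨y, hy⟩) := Iff.rfl

lemma restrict_rel (V : Set α) (σ : Setoid α) (x y : ↥V) :
    restrict V σ x y ↔ σ x.1 y.1 := Iff.rfl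

lemma restrict_glue_left (B : Set α) (τ : Setoid ↥B) (ρ : Setoid ↥(Bᶜ)) :
    restrict B (glue B τ ρ) = τ := by
  apply Setoid.ext
  intro x y
  rw [restrict_rel, glue_rel]
  constructor
  · rintro (⟨hx, hy, h⟩ | ⟨hx, _, _⟩)
    · convert h <;> exact rfl
    · exact absurd x.2 hx
  · intro h
    exact Or.inl ⟨x.2, y.2, h⟩

lemma restrict_glue_right (B : Set α) (τ : Setoid ↥B) (ρ : Setoid ↥(Bᶜ)) :
    restrict Bᶜ (glue B τ ρ) = ρ := by
  apply Setoid.ext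
  intro x y
  rw [restrict_rel, glue_rel]
  constructor
  · rintro (⟨hx, _, _⟩ | ⟨hx, hy, h⟩)
    · exact absurd hx x.2
    · convert h <;> exact rfl
  · intro h
    exact Or.inr ⟨x.2, y.2, h⟩

lemma glue_restrict (B : Set α) (σ : Setoid α)
    (hsat : ∀ x y : α, σ x y → (x ∈ B ↔ y ∈ B)) :
    glue B (restrict B σ) (restrict Bᶜ σ) = σ := by
  apply Setoid.ext
  intro x y
  rw [glue_rel]
  constructor
  · rintro (⟨_, _, h⟩ | ⟨_, _, h⟩) <;> exact h
  · intro h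
    by_cases hx : x ∈ B
    · exact Or.inl ⟨hx, (hsat x y h).1 hx, h⟩
    · exact Or.inr ⟨hx, fun hy => hx ((hsat x y h).2 hy), h⟩

lemma sat_of_le_block {π : Setoid α} {B : Set α}
    (hB2 : ∀ x y : α, x ∈ B → π x y → y ∈ B) {σ : Setoid α} (hσπ : σ ≤ π) :
    ∀ x y : α, σ x y → (x ∈ B ↔ y ∈ B) :=
  fun x y h => ⟨fun hx => hB2 x y hx (hσπ h), fun hy => hB2 y x hy (hσπ (σ.symm h))⟩

lemma glue_le {π : Setoid α} {B : Set α}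
    (hB1 : ∀ x y : α, x ∈ B → y ∈ B → π x y)
    {τ : Setoid ↥B} {ρ : Setoid ↥(Bᶜ)} (hρ : ρ ≤ restrict Bᶜ π) :
    glue B τ ρ ≤ π := by
  rintro x y (⟨hx, hy, _⟩ | ⟨hx, hy, h⟩)
  · exact hB1 x y hx hy
  · exact hρ h

lemma restrict_mono (V : Set α) {σ σ' : Setoid α} (h : σ ≤ σ') :
    restrict V σ ≤ restrict V σ' :=
  fun {x y} hxy => h hxy

lemma le_of_restrict_le {π σ σ' : Setoid α} {B : Set α}
    (hB2 : ∀ x y : α, x ∈ B → π x y → y ∈ B)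
    (hσπ : σ ≤ π)
    (h1 : restrict B σ ≤ restrict B σ') (h2 : restrict Bᶜ σ ≤ restrict Bᶜ σ') :
    σ ≤ σ' := by
  intro x y h
  by_cases hx : x ∈ B
  · have hy : y ∈ B := hB2 x y hx (hσπ h)
    exact h1 (show restrict B σ ⟨x, hx⟩ ⟨y, hy⟩ from h)
  · have hy : y ∉ B := fun hy => hx (hB2 y x hy (hσπ (σ.symm h)))
    exact h2 (show restrict Bᶜ σ ⟨x, hx⟩ ⟨y, hy⟩ from h)

lemma restrict_eq_top_of_block {π : Setoid α} {B : Set α}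
    (hB1 : ∀ x y : α, x ∈ B → y ∈ B → π x y) :
    restrict B π = ⊤ := by
  apply Setoid.ext
  intro x y
  simp only [restrict_rel]
  exact ⟨fun _ => trivial, fun _ => hB1 x.1 y.1 x.2 y.2⟩

section GlueIBNC

variable [LinearOrder α] {χ : α → Letter} {π : Setoid α} {B : Set α}

lemma glue_mem_IBNC (hπ : π ∈ IBNC χ)
    (hB1 : ∀ x y : α, x ∈ B → y ∈ B → π x y)
    (hB2 : ∀ x y : α, x ∈ B → π x y → y ∈ B)
    {τ : Setoid ↥B} {ρ : Setoid ↥(Bᶜ)}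
    (hτ : τ ∈ IBNC (restChi B χ)) (hρ : ρ ∈ IBNC (restChi Bᶜ χ))
    (hρπ : ρ ≤ restrict Bᶜ π) :
    glue B τ ρ ∈ IBNC χ := by
  have hCsat : ∀ x y : α, x ∈ Bᶜ → π x y → y ∈ Bᶜ :=
    fun x y hx hxy hy => hx (hB2 y x hy (π.symm hxy))
  constructor
  · -- noncrossing
    intro s₁ r₁ s₂ r₂ h1 h2 h3 hs hr
    rw [glue_rel] at hs hr ⊢
    rcases hs with ⟨hs₁, hs₂, hsrel⟩ | ⟨hs₁, hs₂, hsrel⟩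
    · rcases hr with ⟨hr₁, hr₂, hrrel⟩ | ⟨hr₁, hr₂, hrrel⟩
      · -- all in B
        refine Or.inl ⟨hs₁, hr₁, ?_⟩
        refine hτ.1 ⟨s₁, hs₁⟩ ⟨r₁, hr₁⟩ ⟨s₂, hs₂⟩ ⟨r₂, hr₂⟩ ?_ ?_ ?_ hsrel hrrel
        · exact (chiLT_comp (fun _ _ => Iff.symm Subtype.coe_lt_coe) (fun _ => rfl) _ _).2 h1
        · exact (chiLT_comp (fun _ _ => Iff.symm Subtype.coe_lt_coe) (fun _ => rfl) _ _).2 h2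
        · exact (chiLT_comp (fun _ _ => Iff.symm Subtype.coe_lt_coe) (fun _ => rfl) _ _).2 h3
      · -- s's in B, r's in Bᶜ : contradiction with π noncrossing
        exfalso
        have hπs : π s₁ s₂ := hB1 _ _ hs₁ hs₂
        have hπr : π r₁ r₂ := hρπ hrrel
        have : π s₁ r₁ := hπ.1 s₁ r₁ s₂ r₂ h1 h2 h3 hπs hπr
        exact hr₁ (hB2 s₁ r₁ hs₁ this)
    · rcases hr with ⟨hr₁, hr₂, hrrel⟩ | ⟨hr₁, hr₂, hrrel⟩
      · -- s's in Bᶜ, r's in B : contradiction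
        exfalso
        have hπs : π s₁ s₂ := hρπ hsrel
        have hπr : π r₁ r₂ := hB1 _ _ hr₁ hr₂
        have : π s₁ r₁ := hπ.1 s₁ r₁ s₂ r₂ h1 h2 h3 hπs hπr
        exact hs₁ (hB2 r₁ s₁ hr₁ (π.symm this))
      · -- all in Bᶜ
        refine Or.inr ⟨hs₁, hr₁, ?_⟩
        refine hρ.1 ⟨s₁, hs₁⟩ ⟨r₁, hr₁⟩ ⟨s₂, hs₂⟩ ⟨r₂, hr₂⟩ ?_ ?_ ?_ hsrel hrrel
        · exact (chiLT_comp (fun _ _ => Iff.symm Subtype.coe_lt_coe) (fun _ => rfl) _ _).2 h1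
        · exact (chiLT_comp (fun _ _ => Iff.symm Subtype.coe_lt_coe) (fun _ => rfl) _ _).2 h2
        · exact (chiLT_comp (fun _ _ => Iff.symm Subtype.coe_lt_coe) (fun _ => rfl) _ _).2 h3
  · -- interval
    intro i j k hij hjk hc hik
    rw [glue_rel] at hik ⊢
    rcases hik with ⟨hi, hk, hrel⟩ | ⟨hi, hk, hrel⟩
    · have hπik : π i k := hB1 _ _ hi hk
      have hπij : π i j := hπ.2 i j k hij hjk hc hπik
      have hj : j ∈ B := hB2 i j hi hπij
      exact Or.inl ⟨hi, hj, hτ.2 ⟨i, hi⟩ ⟨j, hj⟩ ⟨k, hk⟩ hij hjk hc hrel⟩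
    · have hπik : π i k := hρπ hrel
      have hπij : π i j := hπ.2 i j k hij hjk hc hπik
      have hj : j ∈ Bᶜ := hCsat i j hi hπij
      exact Or.inr ⟨hi, hj, hρ.2 ⟨i, hi⟩ ⟨j, hj⟩ ⟨k, hk⟩ hij hjk hc hrel⟩

end GlueIBNC

end Glue

section PhiPart

variable {α A : Type*} [Ring A]

lemma class_eq_iff {σ : Setoid α} (x y : α) :
    (Quotient.mk σ y = Quotient.mk σ x) ↔ σ y x := Quotient.eq

lemma phiPart_split [LinearOrder α] [Finite α] (φ : A → ℂ) (z : α → A)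
    (B : Set α) (σ : Setoid α) (hsat : ∀ x y : α, σ x y → (x ∈ B ↔ y ∈ B)) :
    phiPart φ z σ = phiPart φ (fun x : ↥B => z x.1) (restrict B σ)
      * phiPart φ (fun x : ↥(Bᶜ) => z x.1) (restrict Bᶜ σ) := by
  classical
  unfold phiPart
  -- the two embeddings of quotients
  set u : Quotient (restrict B σ) → Quotient σ :=
    Quotient.lift (fun x : ↥B => Quotient.mk σ x.1)
      (fun x y (h : σ x.1 y.1) => Quotient.sound h) with hu
  set v : Quotient (restrict Bᶜ σ) → Quotient σ :=
    Quotient.lift (fun x : ↥(Bᶜ) => Quotient.mk σ x.1)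
      (fun x y (h : σ x.1 y.1) => Quotient.sound h) with hv
  have hu_inj : Function.Injective u := by
    rintro ⟨x⟩ ⟨y⟩ h
    exact Quotient.sound (show σ x.1 y.1 from Quotient.exact h)
  have hv_inj : Function.Injective v := by
    rintro ⟨x⟩ ⟨y⟩ h
    exact Quotient.sound (show σ x.1 y.1 from Quotient.exact h)
  have hdisj : Disjoint (Set.range u) (Set.range v) := by
    rw [Set.disjoint_iff]
    rintro q ⟨⟨p, hp⟩, ⟨p', hp'⟩⟩
    induction p using Quotient.ind
    induction p' using Quotient.ind
    rename_i x x'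
    have h1 : Quotient.mk σ x.1 = q := hp
    have h2 : Quotient.mk σ x'.1 = q := hp'
    have h3 : σ x.1 x'.1 := Quotient.exact (h1.trans h2.symm)
    exact x'.2 ((hsat _ _ h3).1 x.2)
  have hcover : Set.range u ∪ Set.range v = Set.univ := by
    apply Set.eq_univ_of_forall
    intro q
    induction q using Quotient.ind
    rename_i x
    by_cases hx : x ∈ B
    · exact Or.inl ⟨Quotient.mk _ (⟨x, hx⟩ : ↥B), rfl⟩
    · exact Or.inr ⟨Quotient.mk _ (⟨x, hx⟩ : ↥(Bᶜ)), rfl⟩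
  have hBval : ∀ p : Quotient (restrict B σ),
      phiV φ z {y | Quotient.mk σ y = u p}
        = phiV φ (fun x : ↥B => z x.1) {y | Quotient.mk (restrict B σ) y = p} := by
    intro p
    induction p using Quotient.ind
    rename_i x
    have hset : {y | Quotient.mk σ y = u (Quotient.mk _ x)}
        = Subtype.val '' {y : ↥B | Quotient.mk (restrict B σ) y = Quotient.mk _ x} := by
      ext y
      simp only [Set.mem_setOf_eq, Set.mem_image]
      constructor
      · intro h
        have hrel : σ y x.1 := Quotient.exact h
        have hy : y ∈ B := (hsat _ _ hrel).2 x.2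
        exact ⟨⟨y, hy⟩, Quotient.sound (show σ y x.1 from hrel), rfl⟩
      · rintro ⟨⟨y', hy'⟩, h, rfl⟩
        have h' : restrict B σ ⟨y', hy'⟩ x := Quotient.exact h
        have h'' : σ y' x.1 := h'
        exact Quotient.sound h''
    rw [hset, ← phiV_comp φ z (fun _ _ => Iff.symm Subtype.coe_le_coe)]
  have hCval : ∀ p : Quotient (restrict Bᶜ σ),
      phiV φ z {y | Quotient.mk σ y = v p}
        = phiV φ (fun x : ↥(Bᶜ) => z x.1) {y | Quotient.mk (restrict Bᶜ σ) y = p} := by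
    intro p
    induction p using Quotient.ind
    rename_i x
    have hset : {y | Quotient.mk σ y = v (Quotient.mk _ x)}
        = Subtype.val '' {y : ↥(Bᶜ) | Quotient.mk (restrict Bᶜ σ) y = Quotient.mk _ x} := by
      ext y
      simp only [Set.mem_setOf_eq, Set.mem_image]
      constructor
      · intro h
        have hrel : σ y x.1 := Quotient.exact h
        have hy : y ∈ Bᶜ := fun hyB => x.2 ((hsat _ _ hrel).1 hyB)
        exact ⟨⟨y, hy⟩, Quotient.sound (show σ y x.1 from hrel), rfl⟩
      · rintro ⟨⟨y', hy'⟩, h, rfl⟩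
        have h' : restrict Bᶜ σ ⟨y', hy'⟩ x := Quotient.exact h
        have h'' : σ y' x.1 := h'
        exact Quotient.sound h''
    rw [hset, ← phiV_comp φ z (fun _ _ => Iff.symm Subtype.coe_le_coe)]
  calc ∏ᶠ q : Quotient σ, phiV φ z {y | Quotient.mk σ y = q}
      = ∏ᶠ q ∈ Set.range u ∪ Set.range v, phiV φ z {y | Quotient.mk σ y = q} := by
        rw [hcover, finprod_mem_univ]
    _ = (∏ᶠ q ∈ Set.range u, phiV φ z {y | Quotient.mk σ y = q})
        * ∏ᶠ q ∈ Set.range v, phiV φ z {y | Quotient.mk σ y = q} := by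
        apply finprod_mem_union hdisj (Set.toFinite _) (Set.toFinite _)
    _ = _ := by
        rw [finprod_mem_range hu_inj, finprod_mem_range hv_inj]
        rw [finprod_congr hBval, finprod_congr hCval]

end PhiPart

section Push

variable {γ δ A : Type*} [Ring A]

lemma comap_inv {f : γ → δ} {g : δ → γ} (h : ∀ x, g (f x) = x) (σ : Setoid γ) :
    Setoid.comap f (Setoid.comap g σ) = σ := by
  apply Setoid.ext
  intro x y
  rw [comap_rel, comap_rel, h, h]

lemma comap_mono (f : γ → δ) {σ σ' : Setoid δ} (h : σ ≤ σ') :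
    Setoid.comap f σ ≤ Setoid.comap f σ' := fun {x y} hxy => h hxy

lemma comap_top (f : γ → δ) : Setoid.comap f (⊤ : Setoid δ) = ⊤ := by
  apply Setoid.ext
  intro x y
  exact ⟨fun _ => trivial, fun _ => trivial⟩

lemma comap_equiv_le_iff (e : γ ≃ δ) (σ σ' : Setoid δ) :
    Setoid.comap e σ ≤ Setoid.comap e σ' ↔ σ ≤ σ' := by
  constructor
  · intro h x y hxy
    have := h (show Setoid.comap e σ (e.symm x) (e.symm y) by
      rw [comap_rel, e.apply_symm_apply, e.apply_symm_apply]; exact hxy)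
    rwa [comap_rel, e.apply_symm_apply, e.apply_symm_apply] at this
  · exact fun h => comap_mono _ h

lemma mem_IBNC_comap_symm_iff [LinearOrder γ] [LinearOrder δ] (e : γ ≃o δ)
    (χ : γ → Letter) (σ : Setoid γ) :
    Setoid.comap e.symm σ ∈ IBNC (fun x => χ (e.symm x)) ↔ σ ∈ IBNC χ := by
  constructor
  · intro h
    have := comap_mem_IBNC (f := ⇑e) (fun a b => by rw [OrderIso.lt_iff_lt])
      (χ := fun x => χ (e.symm x)) (χ' := χ) (fun x => (congrArg χ (e.symm_apply_apply x)).symm) h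
    rwa [comap_inv e.symm_apply_apply σ] at this
  · exact fun h => comap_mem_IBNC (f := ⇑e.symm) (fun a b => by rw [OrderIso.lt_iff_lt])
      (fun _ => rfl) h

lemma phiPart_comap_symm [LinearOrder γ] [LinearOrder δ] [Finite γ] [Finite δ]
    (φ : A → ℂ) (z : γ → A) (e : γ ≃o δ) (σ : Setoid γ) :
    phiPart φ (fun x => z (e.symm x)) (Setoid.comap e.symm σ) = phiPart φ z σ := by
  unfold phiPart
  have resp : ∀ x y : γ, σ x y →
      Quotient.mk (Setoid.comap (⇑e.symm) σ) (e x) = Quotient.mk _ (e y) := by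
    intro x y h
    apply Quotient.sound
    show Setoid.comap (⇑e.symm) σ (e x) (e y)
    rw [comap_rel, e.symm_apply_apply, e.symm_apply_apply]
    exact h
  set q : Quotient σ → Quotient (Setoid.comap (⇑e.symm) σ) :=
    Quotient.lift (fun x : γ => Quotient.mk (Setoid.comap (⇑e.symm) σ) (e x)) resp with hq
  have hbij : Function.Bijective q := by
    constructor
    · rintro ⟨x⟩ ⟨y⟩ h
      have h' : Setoid.comap (⇑e.symm) σ (e x) (e y) := Quotient.exact h
      have h'' : σ (e.symm (e x)) (e.symm (e y)) := h'
      rw [e.symm_apply_apply, e.symm_apply_apply] at h''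
      exact Quotient.sound h''
    · rintro ⟨d⟩
      refine ⟨Quotient.mk σ (e.symm d), ?_⟩
      show Quotient.mk _ (e (e.symm d)) = Quotient.mk _ d
      rw [e.apply_symm_apply]
  refine (finprod_eq_of_bijective q hbij ?_).symm
  rintro ⟨x⟩
  show phiV φ z {y | Quotient.mk σ y = Quotient.mk σ x}
      = phiV φ (fun w => z (e.symm w)) {y | Quotient.mk _ y = Quotient.mk _ (e x)}
  have hset : {y : δ | Quotient.mk (Setoid.comap (⇑e.symm) σ) y
        = Quotient.mk (Setoid.comap (⇑e.symm) σ) (e x)}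
      = ⇑e.symm ⁻¹' {y : γ | Quotient.mk σ y = Quotient.mk σ x} := by
    ext d
    simp only [Set.mem_setOf_eq, Set.mem_preimage]
    constructor
    · intro h
      have h' : Setoid.comap (⇑e.symm) σ d (e x) := Quotient.exact h
      have h'' : σ (e.symm d) (e.symm (e x)) := h'
      rw [e.symm_apply_apply] at h''
      exact Quotient.sound h''
    · intro h
      have h' : σ (e.symm d) x := Quotient.exact h
      apply Quotient.sound
      show σ (e.symm d) (e.symm (e x))
      rwa [e.symm_apply_apply]
  have hpre : ⇑e.symm ⁻¹' {y : γ | Quotient.mk σ y = Quotient.mk σ x}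
      = ⇑e '' {y : γ | Quotient.mk σ y = Quotient.mk σ x} := by
    rw [Set.image_eq_preimage_of_inverse e.symm_apply_apply e.apply_symm_apply]
  rw [hset, hpre, ← phiV_comp φ (fun w => z (e.symm w)) (fun a b => (OrderIso.le_iff_le e).symm)]
  congr 1
  funext w
  rw [e.symm_apply_apply]

lemma isMobius_comap_symm [LinearOrder γ] [LinearOrder δ] [Finite γ] [Finite δ]
    (e : γ ≃o δ) (χ : γ → Letter) (mu : Setoid γ → Setoid γ → ℂ)
    (hmu : IsMobius (IBNC χ) mu) :
    IsMobius (IBNC (fun x => χ (e.symm x)))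
      (fun a b => mu (Setoid.comap e a) (Setoid.comap e b)) := by
  intro a ha b hb hab
  have ha' : Setoid.comap ⇑e a ∈ IBNC χ := by
    rw [← mem_IBNC_comap_symm_iff e, comap_inv e.apply_symm_apply] ; exact ha
  have hb' : Setoid.comap ⇑e b ∈ IBNC χ := by
    rw [← mem_IBNC_comap_symm_iff e, comap_inv e.apply_symm_apply] ; exact hb
  have hab' : Setoid.comap ⇑e a ≤ Setoid.comap ⇑e b := comap_mono _ hab
  have hsets : {c | c ∈ IBNC (fun x => χ (e.symm x)) ∧ a ≤ c ∧ c ≤ b}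
      = (fun s => Setoid.comap ⇑e.symm s) ''
        {c | c ∈ IBNC χ ∧ Setoid.comap ⇑e a ≤ c ∧ c ≤ Setoid.comap ⇑e b} := by
    ext c
    simp only [Set.mem_setOf_eq, Set.mem_image]
    constructor
    · intro ⟨h1, h2, h3⟩
      refine ⟨Setoid.comap ⇑e c, ⟨?_, ?_, ?_⟩, comap_inv e.apply_symm_apply c⟩
      · rw [← mem_IBNC_comap_symm_iff e, comap_inv e.apply_symm_apply]; exact h1
      · exact comap_mono _ h2
      · exact comap_mono _ h3
    · rintro ⟨s, ⟨h1, h2, h3⟩, rfl⟩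
      refine ⟨(mem_IBNC_comap_symm_iff e χ s).2 h1, ?_, ?_⟩
      · have := comap_mono ⇑e.symm h2
        rwa [comap_inv e.apply_symm_apply] at this
      · have := comap_mono ⇑e.symm h3
        rwa [comap_inv e.apply_symm_apply] at this
  have hinj : Function.Injective (fun s : Setoid γ => Setoid.comap ⇑e.symm s) := by
    intro s t h
    have h' := congrArg (Setoid.comap ⇑e) h
    simpa only [comap_inv e.symm_apply_apply] using h'
  have heqiff : (a = b) ↔ (Setoid.comap ⇑e a = Setoid.comap ⇑e b) := by
    constructor
    · intro h; rw [h]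
    · intro h
      have h' := congrArg (Setoid.comap ⇑e.symm) h
      rwa [comap_inv e.apply_symm_apply, comap_inv e.apply_symm_apply] at h'
  obtain ⟨hL, hR⟩ := hmu (Setoid.comap ⇑e a) ha' (Setoid.comap ⇑e b) hb' hab'
  constructor
  · rw [hsets, finsum_mem_image hinj.injOn]
    simp only [comap_inv e.symm_apply_apply]
    rw [hL]
    simp only [heqiff]
  · rw [hsets, finsum_mem_image hinj.injOn]
    simp only [comap_inv e.symm_apply_apply]
    rw [hR]
    simp only [heqiff]

lemma cum_comap_symm [LinearOrder γ] [LinearOrder δ] [Finite γ] [Finite δ]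
    (φ : A → ℂ) (z : γ → A) (e : γ ≃o δ) (χ : γ → Letter)
    (mu : Setoid γ → Setoid γ → ℂ) :
    cum φ (fun x => χ (e.symm x)) (fun a b => mu (Setoid.comap e a) (Setoid.comap e b))
      (fun x => z (e.symm x)) ⊤ = cum φ χ mu z ⊤ := by
  unfold cum
  have hsets : {s | s ∈ IBNC (fun x => χ (e.symm x)) ∧ s ≤ ⊤}
      = (fun s => Setoid.comap ⇑e.symm s) '' {s | s ∈ IBNC χ ∧ s ≤ ⊤} := by
    ext c
    simp only [Set.mem_setOf_eq, Set.mem_image, le_top, and_true]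
    constructor
    · intro h1
      exact ⟨Setoid.comap ⇑e c, by
        rw [← mem_IBNC_comap_symm_iff e, comap_inv e.apply_symm_apply]; exact h1,
        comap_inv e.apply_symm_apply c⟩
    · rintro ⟨s, h1, rfl⟩
      exact (mem_IBNC_comap_symm_iff e χ s).2 h1
  have hinj : Function.Injective (fun s : Setoid γ => Setoid.comap ⇑e.symm s) := by
    intro s t h
    have h' := congrArg (Setoid.comap ⇑e) h
    simpa only [comap_inv e.symm_apply_apply] using h'
  rw [hsets, finsum_mem_image hinj.injOn]
  apply finsum_mem_congr rfl
  intro s _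
  show mu (Setoid.comap ⇑e (Setoid.comap ⇑e.symm s)) (Setoid.comap ⇑e ⊤)
      * phiPart φ (fun x => z (e.symm x)) (Setoid.comap ⇑e.symm s) = mu s ⊤ * phiPart φ z s
  rw [comap_inv e.symm_apply_apply, comap_top, phiPart_comap_symm φ z e s]

end Push

section Split

variable {α : Type*} [LinearOrder α] [Finite α] {χ : α → Letter} {π : Setoid α} {B : Set α}

lemma sum_split (hπ : π ∈ IBNC χ)
    (hB1 : ∀ x y : α, x ∈ B → y ∈ B → π x y)
    (hB2 : ∀ x y : α, x ∈ B → π x y → y ∈ B)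
    (g : Setoid ↥B → ℂ) (h : Setoid ↥(Bᶜ) → ℂ)
    (T : Set (Setoid ↥B)) (U : Set (Setoid ↥(Bᶜ))) :
    ∑ᶠ σ ∈ {σ : Setoid α | σ ∈ IBNC χ ∧ σ ≤ π ∧ restrict B σ ∈ T ∧ restrict Bᶜ σ ∈ U},
        g (restrict B σ) * h (restrict Bᶜ σ)
    = (∑ᶠ τ ∈ {τ : Setoid ↥B | τ ∈ IBNC (restChi B χ) ∧ τ ∈ T}, g τ)
      * ∑ᶠ ρ ∈ {ρ : Setoid ↥(Bᶜ) |
          ρ ∈ IBNC (restChi Bᶜ χ) ∧ ρ ≤ restrict Bᶜ π ∧ ρ ∈ U}, h ρ := by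
  rw [finsum_mem_eq_finite_toFinset_sum _ (Set.toFinite _),
    finsum_mem_eq_finite_toFinset_sum _ (Set.toFinite _),
    finsum_mem_eq_finite_toFinset_sum _ (Set.toFinite _),
    Finset.sum_mul_sum, ← Finset.sum_product']
  refine Finset.sum_nbij' (fun σ => (restrict B σ, restrict Bᶜ σ))
    (fun p => glue B p.1 p.2) ?_ ?_ ?_ ?_ ?_
  · intro σ hσ
    rw [Set.Finite.mem_toFinset, Set.mem_setOf_eq] at hσ
    rw [Finset.mem_product, Set.Finite.mem_toFinset, Set.Finite.mem_toFinset]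
    exact ⟨⟨restrict_mem_IBNC hσ.1 B, hσ.2.2.1⟩,
      ⟨restrict_mem_IBNC hσ.1 Bᶜ, restrict_mono Bᶜ hσ.2.1, hσ.2.2.2⟩⟩
  · intro p hp
    rw [Finset.mem_product, Set.Finite.mem_toFinset, Set.Finite.mem_toFinset] at hp
    rw [Set.Finite.mem_toFinset, Set.mem_setOf_eq]
    refine ⟨glue_mem_IBNC hπ hB1 hB2 hp.1.1 hp.2.1 hp.2.2.1, glue_le hB1 hp.2.2.1, ?_, ?_⟩
    · rw [restrict_glue_left]; exact hp.1.2
    · rw [restrict_glue_right]; exact hp.2.2.2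
  · intro σ hσ
    rw [Set.Finite.mem_toFinset, Set.mem_setOf_eq] at hσ
    exact glue_restrict B σ (sat_of_le_block hB2 hσ.2.1)
  · intro p hp
    exact Prod.ext (restrict_glue_left B p.1 p.2) (restrict_glue_right B p.1 p.2)
  · intro σ hσ
    rfl

lemma mu_split {mu : Setoid α → Setoid α → ℂ}
    {muB : Setoid ↥B → Setoid ↥B → ℂ} {muC : Setoid ↥(Bᶜ) → Setoid ↥(Bᶜ) → ℂ}
    (hmu : IsMobius (IBNC χ) mu)
    (hmuB : IsMobius (IBNC (restChi B χ)) muB)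
    (hmuC : IsMobius (IBNC (restChi Bᶜ χ)) muC)
    (hπ : π ∈ IBNC χ)
    (hB1 : ∀ x y : α, x ∈ B → y ∈ B → π x y)
    (hB2 : ∀ x y : α, x ∈ B → π x y → y ∈ B) :
    ∀ σ ∈ IBNC χ, σ ≤ π →
      mu σ π = muB (restrict B σ) ⊤ * muC (restrict Bᶜ σ) (restrict Bᶜ π) := by
  apply mobius_row_unique (IBNC χ) π (fun σ => mu σ π)
    (fun σ => muB (restrict B σ) ⊤ * muC (restrict Bᶜ σ) (restrict Bᶜ π))
  · intro a ha hab
    exact (hmu a ha π hπ hab).2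
  · intro a ha hab
    have hsets : {c | c ∈ IBNC χ ∧ a ≤ c ∧ c ≤ π}
        = {σ : Setoid α | σ ∈ IBNC χ ∧ σ ≤ π ∧ restrict B σ ∈ {τ | restrict B a ≤ τ}
            ∧ restrict Bᶜ σ ∈ {ρ | restrict Bᶜ a ≤ ρ}} := by
      ext c
      simp only [Set.mem_setOf_eq]
      constructor
      · rintro ⟨h1, h2, h3⟩
        exact ⟨h1, h3, restrict_mono B h2, restrict_mono Bᶜ h2⟩
      · rintro ⟨h1, h2, h3, h4⟩
        exact ⟨h1, le_of_restrict_le hB2 hab h3 h4, h2⟩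
    rw [hsets]
    refine Eq.trans (sum_split hπ hB1 hB2 (fun τ => muB τ ⊤)
      (fun ρ => muC ρ (restrict Bᶜ π)) {τ | restrict B a ≤ τ} {ρ | restrict Bᶜ a ≤ ρ}) ?_
    have hfac1 : ∑ᶠ τ ∈ {τ : Setoid ↥B | τ ∈ IBNC (restChi B χ) ∧ τ ∈ {τ | restrict B a ≤ τ}},
        muB τ ⊤ = if restrict B a = ⊤ then 1 else 0 := by
      have hsets2 : {τ : Setoid ↥B | τ ∈ IBNC (restChi B χ) ∧ τ ∈ {τ | restrict B a ≤ τ}}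
          = {c | c ∈ IBNC (restChi B χ) ∧ restrict B a ≤ c ∧ c ≤ ⊤} := by
        ext τ; simp only [Set.mem_setOf_eq, le_top, and_true]
      rw [hsets2]
      exact (hmuB (restrict B a) (restrict_mem_IBNC ha B) ⊤ (top_mem_IBNC _) le_top).2
    have hfac2 : ∑ᶠ ρ ∈ {ρ : Setoid ↥(Bᶜ) | ρ ∈ IBNC (restChi Bᶜ χ) ∧ ρ ≤ restrict Bᶜ π
          ∧ ρ ∈ {ρ | restrict Bᶜ a ≤ ρ}}, muC ρ (restrict Bᶜ π)
        = if restrict Bᶜ a = restrict Bᶜ π then 1 else 0 := by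
      have hsets2 : {ρ : Setoid ↥(Bᶜ) | ρ ∈ IBNC (restChi Bᶜ χ) ∧ ρ ≤ restrict Bᶜ π
            ∧ ρ ∈ {ρ | restrict Bᶜ a ≤ ρ}}
          = {c | c ∈ IBNC (restChi Bᶜ χ) ∧ restrict Bᶜ a ≤ c ∧ c ≤ restrict Bᶜ π} := by
        ext ρ
        simp only [Set.mem_setOf_eq]
        tauto
      rw [hsets2]
      exact (hmuC (restrict Bᶜ a) (restrict_mem_IBNC ha Bᶜ) (restrict Bᶜ π)
        (restrict_mem_IBNC hπ Bᶜ) (restrict_mono Bᶜ hab)).2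
    rw [hfac1, hfac2]
    by_cases haπ : a = π
    · subst haπ
      rw [if_pos (restrict_eq_top_of_block hB1), if_pos rfl, if_pos rfl, one_mul]
    · rw [if_neg haπ]
      by_cases h1 : restrict B a = ⊤
      · by_cases h2 : restrict Bᶜ a = restrict Bᶜ π
        · exfalso
          apply haπ
          apply le_antisymm hab
          apply le_of_restrict_le (σ := π) hB2 le_rfl
          · rw [restrict_eq_top_of_block hB1, h1]
          · rw [← h2]
        · rw [if_neg h2, mul_zero]
      · rw [if_neg h1, zero_mul]

end Split

section Vanish

lemma finsum_mem_set_eq_sum {β : Type*} [Fintype β] (s : Set β) (F : β → ℂ) :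
    ∑ᶠ x ∈ s, F x = ∑ x : β, if x ∈ s then F x else 0 :=
  finsum_mem_setOf_eq_sum (fun x => x ∈ s) F

variable {A : Type*} [Ring A] [Algebra ℂ A] {I : Type*}

/-- Mixed free-free-Boolean cumulants vanish, not just at `⊤` but at any
interval-bi-noncrossing partition with a mixed block. -/
lemma cum_eq_zero_of_mixed_block (φ : A →ₗ[ℂ] ℂ)
    (F : I → Letter → NonUnitalSubalgebra ℂ A) (hF : CombFFB φ F)
    (n : ℕ) (χ : Fin n → Letter) (ω : Fin n → I)
    (z : Fin n → A) (hz : ∀ k, z k ∈ F (ω k) (χ k))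
    (mu : Setoid (Fin n) → Setoid (Fin n) → ℂ) (hmu : IsMobius (IBNC χ) mu)
    (π : Setoid (Fin n)) (hπ : π ∈ IBNC χ) (hne : ¬ π ≤ Setoid.ker ω) :
    cum (⇑φ) χ mu z π = 0 := by
  classical
  -- find a mixed block
  have hex : ∃ x y : Fin n, π x y ∧ ω x ≠ ω y := by
    by_contra h
    push_neg at h
    exact hne fun {x y} hxy => h x y hxy
  obtain ⟨x, y, hxy, hωxy⟩ := hex
  set B : Set (Fin n) := {w | π x w} with hB
  have hxB : x ∈ B := π.refl x
  have hyB : y ∈ B := hxy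
  have hB1 : ∀ u v : Fin n, u ∈ B → v ∈ B → π u v :=
    fun u v hu hv => π.trans (π.symm hu) hv
  have hB2 : ∀ u v : Fin n, u ∈ B → π u v → v ∈ B :=
    fun u v hu huv => π.trans hu huv
  -- Möbius functions on the two pieces
  obtain ⟨muB, hmuB⟩ := exists_isMobius (IBNC (restChi B χ))
  obtain ⟨muC, hmuC⟩ := exists_isMobius (IBNC (restChi Bᶜ χ))
  -- the cumulant factors
  have hfac : cum (⇑φ) χ mu z π
      = cum (⇑φ) (restChi B χ) muB (fun w : ↥B => z w.1) ⊤
        * ∑ᶠ ρ ∈ {ρ : Setoid ↥(Bᶜ) | ρ ∈ IBNC (restChi Bᶜ χ) ∧ ρ ≤ restrict Bᶜ π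
            ∧ ρ ∈ (Set.univ : Set (Setoid ↥(Bᶜ)))},
            muC ρ (restrict Bᶜ π) * phiPart (⇑φ) (fun w : ↥(Bᶜ) => z w.1) ρ := by
    unfold cum
    have hsets : {σ : Setoid (Fin n) | σ ∈ IBNC χ ∧ σ ≤ π}
        = {σ : Setoid (Fin n) | σ ∈ IBNC χ ∧ σ ≤ π
            ∧ restrict B σ ∈ (Set.univ : Set (Setoid ↥B))
            ∧ restrict Bᶜ σ ∈ (Set.univ : Set (Setoid ↥(Bᶜ)))} := by
      ext σ
      simp only [Set.mem_setOf_eq, Set.mem_univ, and_true]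
    rw [hsets]
    have hterm : ∀ σ ∈ {σ : Setoid (Fin n) | σ ∈ IBNC χ ∧ σ ≤ π
        ∧ restrict B σ ∈ (Set.univ : Set (Setoid ↥B))
        ∧ restrict Bᶜ σ ∈ (Set.univ : Set (Setoid ↥(Bᶜ)))},
        mu σ π * phiPart (⇑φ) z σ
          = (fun τ => muB τ ⊤ * phiPart (⇑φ) (fun w : ↥B => z w.1) τ) (restrict B σ)
            * (fun ρ => muC ρ (restrict Bᶜ π)
                * phiPart (⇑φ) (fun w : ↥(Bᶜ) => z w.1) ρ) (restrict Bᶜ σ) := by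
      intro σ hσ
      rw [Set.mem_setOf_eq] at hσ
      rw [mu_split hmu hmuB hmuC hπ hB1 hB2 σ hσ.1 hσ.2.1,
        phiPart_split (⇑φ) z B σ (sat_of_le_block hB2 hσ.2.1)]
      ring
    rw [finsum_mem_congr rfl hterm]
    rw [sum_split hπ hB1 hB2 (fun τ => muB τ ⊤ * phiPart (⇑φ) (fun w : ↥B => z w.1) τ)
      (fun ρ => muC ρ (restrict Bᶜ π) * phiPart (⇑φ) (fun w : ↥(Bᶜ) => z w.1) ρ)
      Set.univ Set.univ]
    congr 1
    apply finsum_mem_congr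
    · ext τ
      simp only [Set.mem_setOf_eq, Set.mem_univ, and_true, le_top]
    · intro τ _
      rfl
  -- the B-factor vanishes by hypothesis, after transport to `Fin m`
  have hBzero : cum (⇑φ) (restChi B χ) muB (fun w : ↥B => z w.1) ⊤ = 0 := by
    haveI : Fintype ↥B := Fintype.ofFinite _
    set m := Fintype.card ↥B with hm
    set e : ↥B ≃o Fin m := (Fintype.orderIsoFinOfCardEq (↥B) rfl).symm with he
    rw [← cum_comap_symm (⇑φ) (fun w : ↥B => z w.1) e (restChi B χ) muB]
    apply hF m (fun k => restChi B χ (e.symm k)) (fun k => ω (e.symm k).1)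
      (fun k => z (e.symm k).1)
    · intro k
      exact hz (e.symm k).1
    · rintro ⟨i, hi⟩
      have h1 := hi (e ⟨x, hxB⟩)
      have h2 := hi (e ⟨y, hyB⟩)
      rw [e.symm_apply_apply] at h1 h2
      exact hωxy (h1.trans h2.symm)
    · exact isMobius_comap_symm e (restChi B χ) muB hmuB
  rw [hfac, hBzero, zero_mul]

end Vanish

section Assembly

variable {α : Type*}

/-- Classical indicator, to avoid `Decidable` instance mismatches. -/
noncomputable def ind (P : Prop) (x : ℂ) : ℂ := if P then x else 0

lemma ind_pos {P : Prop} (h : P) (x : ℂ) : ind P x = x := if_pos h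

lemma ind_neg {P : Prop} (h : ¬ P) (x : ℂ) : ind P x = 0 := if_neg h

lemma ind_mul (P : Prop) (x y : ℂ) : ind P x * y = ind P (x * y) := by
  by_cases h : P
  · rw [ind_pos h, ind_pos h]
  · rw [ind_neg h, ind_neg h, zero_mul]

lemma ind_congr {P Q : Prop} (h : P ↔ Q) (x : ℂ) : ind P x = ind Q x := by
  by_cases hP : P
  · rw [ind_pos hP, ind_pos (h.1 hP)]
  · rw [ind_neg hP, ind_neg (fun hQ => hP (h.2 hQ))]

lemma ind_eq_ite {P : Prop} [inst : Decidable P] (x : ℂ) : ind P x = if P then x else 0 := by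
  by_cases h : P
  · rw [ind_pos h, if_pos h]
  · rw [ind_neg h, if_neg h]

lemma finsum_mem_eq_sum_ind {β : Type*} [Fintype β] (s : Set β) (F : β → ℂ) :
    ∑ᶠ x ∈ s, F x = ∑ x : β, ind (x ∈ s) (F x) := by
  rw [finsum_mem_def, finsum_eq_sum_of_fintype]
  apply Finset.sum_congr rfl
  intro x _
  by_cases h : x ∈ s
  · rw [Set.indicator_of_mem h, ind_pos h]
  · rw [Set.indicator_of_notMem h, ind_neg h]

lemma sum_cum_eq {A : Type*} [Ring A] [LinearOrder α] [Finite α] (φ : A → ℂ)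
    (χ : α → Letter) (mu : Setoid α → Setoid α → ℂ) (z : α → A) (E : Set (Setoid α)) :
    ∑ᶠ π ∈ {π : Setoid α | π ∈ IBNC χ ∧ π ∈ E}, cum φ χ mu z π
    = ∑ᶠ σ ∈ IBNC χ,
        (∑ᶠ π ∈ {π : Setoid α | π ∈ IBNC χ ∧ σ ≤ π ∧ π ∈ E}, mu σ π) * phiPart φ z σ := by
  classical
  haveI : Fintype (Setoid α) := Fintype.ofFinite _
  rw [finsum_mem_eq_sum_ind, finsum_mem_eq_sum_ind]
  have L1 : ∀ π : Setoid α,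
      ind (π ∈ {π : Setoid α | π ∈ IBNC χ ∧ π ∈ E}) (cum φ χ mu z π)
      = ∑ σ : Setoid α, ind ((σ ∈ IBNC χ ∧ σ ≤ π) ∧ (π ∈ IBNC χ ∧ π ∈ E))
          (mu σ π * phiPart φ z σ) := by
    intro π
    simp only [Set.mem_setOf_eq]
    by_cases h : π ∈ IBNC χ ∧ π ∈ E
    · rw [ind_pos h]
      unfold cum
      rw [finsum_mem_eq_sum_ind]
      apply Finset.sum_congr rfl
      intro σ _
      simp only [Set.mem_setOf_eq]
      by_cases h2 : σ ∈ IBNC χ ∧ σ ≤ π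
      · rw [ind_pos h2, ind_pos ⟨h2, h⟩]
      · rw [ind_neg h2, ind_neg (fun hc => h2 hc.1)]
    · rw [ind_neg h]
      symm
      apply Finset.sum_eq_zero
      intro σ _
      rw [ind_neg (fun hc => h hc.2)]
  have L2 : ∀ σ : Setoid α,
      (∑ π : Setoid α, ind ((σ ∈ IBNC χ ∧ σ ≤ π) ∧ (π ∈ IBNC χ ∧ π ∈ E))
          (mu σ π * phiPart φ z σ))
      = ind (σ ∈ IBNC χ)
          ((∑ᶠ π ∈ {π : Setoid α | π ∈ IBNC χ ∧ σ ≤ π ∧ π ∈ E}, mu σ π) * phiPart φ z σ) := by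
    intro σ
    by_cases h : σ ∈ IBNC χ
    · rw [ind_pos h, finsum_mem_eq_sum_ind, Finset.sum_mul]
      apply Finset.sum_congr rfl
      intro π _
      rw [ind_mul]
      apply ind_congr
      simp only [Set.mem_setOf_eq]
      tauto
    · rw [ind_neg h]
      apply Finset.sum_eq_zero
      intro π _
      rw [ind_neg (fun hc => h hc.1.1)]
  calc ∑ π : Setoid α, ind (π ∈ {π : Setoid α | π ∈ IBNC χ ∧ π ∈ E}) (cum φ χ mu z π)
      = ∑ π : Setoid α, ∑ σ : Setoid α, ind ((σ ∈ IBNC χ ∧ σ ≤ π) ∧ (π ∈ IBNC χ ∧ π ∈ E))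
          (mu σ π * phiPart φ z σ) := Finset.sum_congr rfl fun π _ => L1 π
    _ = ∑ σ : Setoid α, ∑ π : Setoid α, ind ((σ ∈ IBNC χ ∧ σ ≤ π) ∧ (π ∈ IBNC χ ∧ π ∈ E))
          (mu σ π * phiPart φ z σ) := Finset.sum_comm
    _ = ∑ σ : Setoid α, ind (σ ∈ IBNC χ)
          ((∑ᶠ π ∈ {π : Setoid α | π ∈ IBNC χ ∧ σ ≤ π ∧ π ∈ E}, mu σ π) * phiPart φ z σ) :=
        Finset.sum_congr rfl fun σ _ => L2 σ

lemma phiPart_top_eq {A : Type*} [Ring A] (φ : A → ℂ) (n : ℕ) (hn : 0 < n) (z : Fin n → A) :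
    phiPart φ z (⊤ : Setoid (Fin n)) = φ (List.ofFn z).prod := by
  classical
  unfold phiPart
  haveI : Unique (Quotient (⊤ : Setoid (Fin n))) :=
    { default := Quotient.mk ⊤ ⟨0, hn⟩
      uniq := fun q => by
        induction q using Quotient.ind
        exact Quotient.sound trivial }
  rw [finprod_unique]
  have hset : {y : Fin n | Quotient.mk ⊤ y = default} = Set.univ := by
    apply Set.eq_univ_of_forall
    intro y
    show Quotient.mk ⊤ y = default
    exact (Unique.uniq _ _).symm.symm
  rw [hset]
  unfold phiV
  congr 1
  have h1 : (Set.toFinite (Set.univ : Set (Fin n))).toFinset = Finset.univ := by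
    ext x; simp
  rw [h1, Fin.sort_univ, ← List.ofFn_eq_map]

end Assembly

/-- For a combinatorially free-free-Boolean independent family
`{(A_{i,ℓ}, A_{i,r}, A_{i,c})}_{i∈I}` in `(A,φ)`, with `z_k ∈ A_{ω(k),χ(k)}` and
`ε = ker ω`, the mixed moments are given by
`φ(z₁ ⋯ zₙ) = Σ_{σ ∈ IBNC(χ)} ( Σ_{π ∈ IBNC(χ), σ ≤ π ≤ ε} μ_{IBNC(χ)}(σ,π) ) φ_σ(z)`. -/
theorem moments_of_combinatorially_independent {A : Type*} [Ring A] [Algebra ℂ A]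
    (φ : A →ₗ[ℂ] ℂ) (hφ : φ 1 = 1) {I : Type*}
    (F : I → Letter → NonUnitalSubalgebra ℂ A) (hF : CombFFB φ F)
    (n : ℕ) (hn : 0 < n) (χ : Fin n → Letter) (ω : Fin n → I)
    (z : Fin n → A) (hz : ∀ k, z k ∈ F (ω k) (χ k))
    (mu : Setoid (Fin n) → Setoid (Fin n) → ℂ) (hmu : IsMobius (IBNC χ) mu) :
    φ (List.ofFn z).prod =
      ∑ᶠ σ ∈ IBNC χ,
        (∑ᶠ π ∈ {π | π ∈ IBNC χ ∧ σ ≤ π ∧ π ≤ Setoid.ker ω}, mu σ π) *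
          phiPart (⇑φ) z σ := by
  classical
  haveI : Fintype (Setoid (Fin n)) := Fintype.ofFinite _
  have htop := top_mem_IBNC χ
  rw [← phiPart_top_eq (⇑φ) n hn z]
  have hU := sum_cum_eq (⇑φ) χ mu z (Set.univ : Set (Setoid (Fin n)))
  have hE := sum_cum_eq (⇑φ) χ mu z {π : Setoid (Fin n) | π ≤ Setoid.ker ω}
  have hvanish : ∑ᶠ π ∈ {π : Setoid (Fin n) |
        π ∈ IBNC χ ∧ π ∈ (Set.univ : Set (Setoid (Fin n)))}, cum (⇑φ) χ mu z π
      = ∑ᶠ π ∈ {π : Setoid (Fin n) |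
          π ∈ IBNC χ ∧ π ∈ {π : Setoid (Fin n) | π ≤ Setoid.ker ω}}, cum (⇑φ) χ mu z π := by
    rw [finsum_mem_eq_sum_ind, finsum_mem_eq_sum_ind]
    apply Finset.sum_congr rfl
    intro π _
    simp only [Set.mem_setOf_eq, Set.mem_univ, and_true]
    by_cases h1 : π ∈ IBNC χ
    · by_cases h2 : π ≤ Setoid.ker ω
      · rw [ind_pos h1, ind_pos ⟨h1, h2⟩]
      · rw [ind_pos h1, ind_neg (fun hc => h2 hc.2),
          cum_eq_zero_of_mixed_block φ F hF n χ ω z hz mu hmu π h1 h2]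
    · rw [ind_neg h1, ind_neg (fun hc => h1 hc.1)]
  have hinner : ∀ σ ∈ IBNC χ,
      (∑ᶠ π ∈ {π : Setoid (Fin n) | π ∈ IBNC χ ∧ σ ≤ π
        ∧ π ∈ (Set.univ : Set (Setoid (Fin n)))}, mu σ π) = ind (σ = ⊤) 1 := by
    intro σ hσ
    have hsets : {π : Setoid (Fin n) | π ∈ IBNC χ ∧ σ ≤ π
          ∧ π ∈ (Set.univ : Set (Setoid (Fin n)))}
        = {c | c ∈ IBNC χ ∧ σ ≤ c ∧ c ≤ ⊤} := by
      ext c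
      simp only [Set.mem_setOf_eq, Set.mem_univ, and_true, le_top]
    rw [hsets, (hmu σ hσ ⊤ htop le_top).1, ind_eq_ite]
  have hdelta : ∑ᶠ σ ∈ IBNC χ,
      (∑ᶠ π ∈ {π : Setoid (Fin n) | π ∈ IBNC χ ∧ σ ≤ π
        ∧ π ∈ (Set.univ : Set (Setoid (Fin n)))}, mu σ π) * phiPart (⇑φ) z σ
      = phiPart (⇑φ) z ⊤ := by
    rw [finsum_mem_eq_sum_ind]
    rw [Finset.sum_eq_single ⊤]
    · rw [ind_pos htop, hinner ⊤ htop, ind_pos rfl, one_mul]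
    · intro σ _ hσne
      by_cases h1 : σ ∈ IBNC χ
      · rw [ind_pos h1, hinner σ h1, ind_neg hσne, zero_mul]
      · rw [ind_neg h1]
    · intro habs
      exact absurd (Finset.mem_univ _) habs
  calc phiPart (⇑φ) z ⊤
      = ∑ᶠ σ ∈ IBNC χ,
        (∑ᶠ π ∈ {π : Setoid (Fin n) | π ∈ IBNC χ ∧ σ ≤ π
          ∧ π ∈ (Set.univ : Set (Setoid (Fin n)))}, mu σ π) * phiPart (⇑φ) z σ := hdelta.symm
    _ = ∑ᶠ π ∈ {π : Setoid (Fin n) |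
          π ∈ IBNC χ ∧ π ∈ (Set.univ : Set (Setoid (Fin n)))}, cum (⇑φ) χ mu z π := hU.symm
    _ = ∑ᶠ π ∈ {π : Setoid (Fin n) |
          π ∈ IBNC χ ∧ π ∈ {π : Setoid (Fin n) | π ≤ Setoid.ker ω}}, cum (⇑φ) χ mu z π :=
        hvanish
    _ = ∑ᶠ σ ∈ IBNC χ,
        (∑ᶠ π ∈ {π : Setoid (Fin n) | π ∈ IBNC χ ∧ σ ≤ π
          ∧ π ∈ {π : Setoid (Fin n) | π ≤ Setoid.ker ω}}, mu σ π) * phiPart (⇑φ) z σ := hE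
    _ = ∑ᶠ σ ∈ IBNC χ,
        (∑ᶠ π ∈ {π | π ∈ IBNC χ ∧ σ ≤ π ∧ π ≤ Setoid.ker ω}, mu σ π) *
          phiPart (⇑φ) z σ := rfl

end FFB
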